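/- (Convexity of the minimal f-divergence to a mixture family.) Let Z be a finite nonempty set, let f: [0,∞) → ℝ be convex, and let Q_1, …, Q_n be probability distributions on Z, each with full support. Define, for a probability distribution P on Z, h(P) = min over weight vectors w in the probability simplex Δ_n of D_f(P ‖ Σ_{i=1}^n w_i Q_i), where D_f(P ‖ Q) = Σ_{z∈Z} Q(z) f(P(z)/Q(z)). Then h is a convex function of P on the probability simplex over Z. -/

import Mathlib

open scoped BigOperators

/-- `p` is a probability mass function on a finite type. -/
def IsProb {Z : Type*} [Fintype Z] (p : Z → ℝ) : Prop :=
  (∀ z, 0 ≤ p z) ∧ ∑ z, p z = 1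

section CMDP

variable {S X A : Type*} [Fintype S] [Fintype X] [Fintype A]

/-- A Markovian stationary policy: a distribution over actions for each state–context pair. -/
def IsPolicy (π : S → X → A → ℝ) : Prop :=
  ∀ s x, IsProb (π s x)

/-- The deterministic policy induced by an action map `f`. -/
def detPolicy [DecidableEq A] (f : S → X → A) : S → X → A → ℝ :=
  fun s x a => if a = f s x then 1 else 0

/-- A policy is deterministic if it is induced by an action map. -/
def IsDet [DecidableEq A] (π : S → X → A → ℝ) : Prop :=
  ∃ f : S → X → A, π = detPolicy f

/-- The `t`-step state distribution of the Markov chain induced by policy `π` in context `x`,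
starting from `s₀ ∼ ν(·|x)`. -/
noncomputable def stateDist (P : S → A → X → S → ℝ) (ν : X → S → ℝ)
    (π : S → X → A → ℝ) (x : X) : ℕ → S → ℝ
  | 0 => fun s => ν x s
  | (t+1) => fun s' => ∑ s, ∑ a, stateDist P ν π x t s * π s x a * P s a x s'

/-- The per-context (discounted) stationary distribution
`d^π(s,a|x) = (1−γ) Σ_t γ^t P^π(s_t = s, a_t = a | x)`. -/
noncomputable def dCtx (γ : ℝ) (P : S → A → X → S → ℝ) (ν : X → S → ℝ)
    (π : S → X → A → ℝ) (x : X) (s : S) (a : A) : ℝ :=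
  (1 - γ) * ∑' t : ℕ, γ ^ t * (stateDist P ν π x t s * π s x a)

/-- Marginalized stationary distribution `d_ρ^π(s,a) = E_{x∼ρ}[d^π(s,a|x)]`. -/
noncomputable def dMarg (γ : ℝ) (P : S → A → X → S → ℝ) (ν : X → S → ℝ)
    (ρ : X → ℝ) (π : S → X → A → ℝ) (s : S) (a : A) : ℝ :=
  ∑ x, ρ x * dCtx γ P ν π x s a

/-- The `ρ`-marginalized value `v_ρ(π) = Σ_{x,s,a} ρ(x) d^π(s,a|x) r(s,a,x)`. -/
noncomputable def val (γ : ℝ) (P : S → A → X → S → ℝ) (ν : X → S → ℝ)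
    (ρ : X → ℝ) (r : S → A → X → ℝ) (π : S → X → A → ℝ) : ℝ :=
  ∑ x, ∑ s, ∑ a, ρ x * dCtx γ P ν π x s a * r s a x

/-- The ambiguity set `Π₀(π)`: deterministic policies whose `ρo`-marginalized stationary
distribution matches the `ρe`-marginalized stationary distribution of `π`. -/
def AmbSet [DecidableEq A] (γ : ℝ) (P : S → A → X → S → ℝ) (ν : X → S → ℝ)
    (ρo ρe : X → ℝ) (π : S → X → A → ℝ) : Set (S → X → A → ℝ) :=
  {π' | IsDet π' ∧ ∀ s a, dMarg γ P ν ρo π' s a = dMarg γ P ν ρe π s a}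

end CMDP

lemma perspective_ineq (f : ℝ → ℝ) (hf : ConvexOn ℝ (Set.Ici (0:ℝ)) f)
    {x y a b u v : ℝ} (hx : 0 ≤ x) (hy : 0 ≤ y) (ha : 0 < a) (hb : 0 < b)
    (hu : 0 ≤ u) (hv : 0 ≤ v) (huv : u + v = 1) :
    (u*a + v*b) * f ((u*x + v*y)/(u*a + v*b)) ≤ u * (a * f (x/a)) + v * (b * f (y/b)) := by
  rcases eq_or_lt_of_le hu with h0 | hu'
  · have hv1 : v = 1 := by linarith
    simp [← h0, hv1]
  rcases eq_or_lt_of_le hv with h0 | hv'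
  · have hu1 : u = 1 := by linarith
    simp [← h0, hu1]
  have hc : 0 < u*a + v*b := by positivity
  have hxa : x/a ∈ Set.Ici (0:ℝ) := Set.mem_Ici.mpr (by positivity)
  have hyb : y/b ∈ Set.Ici (0:ℝ) := Set.mem_Ici.mpr (by positivity)
  have hα : 0 ≤ u*a/(u*a+v*b) := by positivity
  have hβ : 0 ≤ v*b/(u*a+v*b) := by positivity
  have hαβ : u*a/(u*a+v*b) + v*b/(u*a+v*b) = 1 := by field_simp
  have key := hf.2 hxa hyb hα hβ hαβ
  have hpt : (u*a/(u*a+v*b)) • (x/a) + (v*b/(u*a+v*b)) • (y/b)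
      = (u*x + v*y)/(u*a+v*b) := by
    simp only [smul_eq_mul]
    field_simp
  rw [hpt] at key
  have := mul_le_mul_of_nonneg_left key hc.le
  calc (u*a + v*b) * f ((u*x + v*y)/(u*a + v*b))
      ≤ (u*a+v*b) * (u*a/(u*a+v*b) * f (x/a) + v*b/(u*a+v*b) * f (y/b)) := this
    _ = u * (a * f (x/a)) + v * (b * f (y/b)) := by field_simp

lemma convex_bddBelow_Icc (f : ℝ → ℝ) (hf : ConvexOn ℝ (Set.Ici (0:ℝ)) f)
    (M : ℝ) (hM : 0 < M) :
    ∀ x ∈ Set.Icc (0:ℝ) M, 2 * f (M/2) - max (f 0) (f M) ≤ f x := by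
  intro x hx
  obtain ⟨hx0, hxM⟩ := hx
  have hMx : M - x ∈ Set.Ici (0:ℝ) := by simp; linarith
  have h0 : (0:ℝ) ∈ Set.Ici (0:ℝ) := Set.mem_Ici.mpr le_rfl
  have hMm : M ∈ Set.Ici (0:ℝ) := Set.mem_Ici.mpr hM.le
  have ht : 0 ≤ x/M := by positivity
  have ht1 : 0 ≤ 1 - x/M := by
    have : x/M ≤ 1 := by rw [div_le_one hM]; exact hxM
    linarith
  have h1 := hf.2 h0 hMm ht ht1 (by ring)
  have hpt1 : (x/M) • (0:ℝ) + (1 - x/M) • M = M - x := by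
    simp only [smul_eq_mul]
    field_simp
    ring
  rw [hpt1] at h1
  simp only [smul_eq_mul] at h1
  have hmax : f (M - x) ≤ max (f 0) (f M) := by
    have e1 := mul_le_mul_of_nonneg_left (le_max_left (f 0) (f M)) ht
    have e2 := mul_le_mul_of_nonneg_left (le_max_right (f 0) (f M)) ht1
    nlinarith
  have h2 := hf.2 (Set.mem_Ici.mpr hx0) hMx (by norm_num : (0:ℝ) ≤ 1/2)
    (by norm_num : (0:ℝ) ≤ 1/2) (by norm_num)
  have hpt2 : (1/2:ℝ) • x + (1/2:ℝ) • (M - x) = M/2 := by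
    simp [smul_eq_mul]; ring
  rw [hpt2] at h2
  simp only [smul_eq_mul] at h2
  linarith


/-- **Convexity of the minimal f-divergence to a mixture family.**
For a finite nonempty set `Z`, a convex `f : [0,∞) → ℝ`, and full-support probability
distributions `Q₁, …, Qₙ` on `Z`, the function
`h(P) = min_{w ∈ Δₙ} D_f(P ‖ Σᵢ wᵢ Qᵢ)` is convex on the probability simplex over `Z`,
where `D_f(P‖Q) = Σ_z Q(z) f(P(z)/Q(z))`. -/
theorem min_f_divergence_convex
    {Z : Type*} [Fintype Z] [Nonempty Z]
    (f : ℝ → ℝ) (hf : ConvexOn ℝ (Set.Ici (0:ℝ)) f)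
    (n : ℕ) (hn : 0 < n)
    (Q : Fin n → Z → ℝ) (hQ : ∀ i, IsProb (Q i)) (hQpos : ∀ i z, 0 < Q i z) :
    ConvexOn ℝ (stdSimplex ℝ Z)
      (fun p : Z → ℝ =>
        sInf ((fun w : Fin n → ℝ =>
          ∑ z, (∑ i, w i * Q i z) * f (p z / ∑ i, w i * Q i z)) ''
            stdSimplex ℝ (Fin n))) := by
  classical
  have hnF : Nonempty (Fin n) := ⟨⟨0, hn⟩⟩
  -- minimum value of all the Q's
  obtain ⟨⟨i₀, z₀⟩, -, hmin⟩ := Finset.exists_min_image (Finset.univ : Finset (Fin n × Z))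
    (fun pr => Q pr.1 pr.2) Finset.univ_nonempty
  set c := Q i₀ z₀ with hcdef
  have hc0 : 0 < c := hQpos i₀ z₀
  -- mixture is bounded below by c
  have hQw : ∀ w ∈ stdSimplex ℝ (Fin n), ∀ z : Z, c ≤ ∑ i, w i * Q i z := by
    intro w hw z
    calc c = ∑ i, w i * c := by rw [← Finset.sum_mul, hw.2, one_mul]
      _ ≤ ∑ i, w i * Q i z := by
          refine Finset.sum_le_sum fun i _ => ?_
          exact mul_le_mul_of_nonneg_left (hmin ⟨i, z⟩ (Finset.mem_univ _)) (hw.1 i)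
  -- mixtures sum to 1
  have hQwsum : ∀ w ∈ stdSimplex ℝ (Fin n), ∑ z, ∑ i, w i * Q i z = 1 := by
    intro w hw
    rw [Finset.sum_comm]
    have : ∀ i : Fin n, ∑ z, w i * Q i z = w i := by
      intro i; rw [← Finset.mul_sum, (hQ i).2, mul_one]
    simp_rw [this]; exact hw.2
  set M := 1/c with hMdef
  have hM0 : 0 < M := by positivity
  set B := 2 * f (M/2) - max (f 0) (f M) with hBdef
  -- divergence notation
  set D := fun (p : Z → ℝ) (w : Fin n → ℝ) =>
    ∑ z, (∑ i, w i * Q i z) * f (p z / ∑ i, w i * Q i z) with hDdef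
  -- ratios lie in [0, M]
  have hratio : ∀ p ∈ stdSimplex ℝ Z, ∀ w ∈ stdSimplex ℝ (Fin n), ∀ z : Z,
      p z / (∑ i, w i * Q i z) ∈ Set.Icc (0:ℝ) M := by
    intro p hp w hw z
    have hq := hQw w hw z
    have hqpos : 0 < ∑ i, w i * Q i z := lt_of_lt_of_le hc0 hq
    constructor
    · exact div_nonneg (hp.1 z) hqpos.le
    · have hp1 : p z ≤ 1 := by
        rw [← hp.2]
        exact Finset.single_le_sum (fun i _ => hp.1 i) (Finset.mem_univ z)
      exact div_le_div₀ zero_le_one hp1 hc0 hq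
  -- lower bound on D
  have hlow : ∀ p ∈ stdSimplex ℝ Z, ∀ w ∈ stdSimplex ℝ (Fin n), B ≤ D p w := by
    intro p hp w hw
    calc B = (∑ z, ∑ i, w i * Q i z) * B := by rw [hQwsum w hw, one_mul]
      _ = ∑ z, (∑ i, w i * Q i z) * B := by rw [Finset.sum_mul]
      _ ≤ D p w := by
          refine Finset.sum_le_sum fun z _ => ?_
          have hq : 0 < ∑ i, w i * Q i z := lt_of_lt_of_le hc0 (hQw w hw z)
          exact mul_le_mul_of_nonneg_left
            (convex_bddBelow_Icc f hf M hM0 _ (hratio p hp w hw z)) hq.le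
  have hbdd : ∀ p ∈ stdSimplex ℝ Z, BddBelow (D p '' stdSimplex ℝ (Fin n)) := by
    intro p hp
    refine ⟨B, ?_⟩
    rintro x ⟨w, hw, rfl⟩
    exact hlow p hp w hw
  have hnes : (stdSimplex ℝ (Fin n)).Nonempty := ⟨_, single_mem_stdSimplex ℝ (Classical.arbitrary (Fin n))⟩
  have hne : ∀ p : Z → ℝ, (D p '' stdSimplex ℝ (Fin n)).Nonempty := fun p => hnes.image _
  refine ⟨convex_stdSimplex ℝ Z, ?_⟩
  intro p hp q hq u v hu hv huv
  have hpq : u • p + v • q ∈ stdSimplex ℝ Z := convex_stdSimplex ℝ Z hp hq hu hv huv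
  refine le_of_forall_pos_le_add fun ε hε => ?_
  obtain ⟨x₁, hx₁, h1⟩ := exists_lt_of_csInf_lt (hne p)
    (lt_add_of_pos_right (sInf (D p '' stdSimplex ℝ (Fin n))) hε)
  obtain ⟨w₁, hw₁, rfl⟩ := hx₁
  obtain ⟨x₂, hx₂, h2⟩ := exists_lt_of_csInf_lt (hne q)
    (lt_add_of_pos_right (sInf (D q '' stdSimplex ℝ (Fin n))) hε)
  obtain ⟨w₂, hw₂, rfl⟩ := hx₂
  have hwmem : u • w₁ + v • w₂ ∈ stdSimplex ℝ (Fin n) :=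
    convex_stdSimplex ℝ (Fin n) hw₁ hw₂ hu hv huv
  have step1 : sInf (D (u • p + v • q) '' stdSimplex ℝ (Fin n))
      ≤ D (u • p + v • q) (u • w₁ + v • w₂) :=
    csInf_le (hbdd _ hpq) ⟨_, hwmem, rfl⟩
  have step2 : D (u • p + v • q) (u • w₁ + v • w₂) ≤ u * D p w₁ + v * D q w₂ := by
    rw [hDdef]
    simp only [Pi.add_apply, Pi.smul_apply, smul_eq_mul]
    have hrw : ∀ z : Z, ∑ i, (u * w₁ i + v * w₂ i) * Q i z
        = u * (∑ i, w₁ i * Q i z) + v * (∑ i, w₂ i * Q i z) := by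
      intro z
      rw [Finset.mul_sum, Finset.mul_sum, ← Finset.sum_add_distrib]
      congr 1; ext i; ring
    simp_rw [hrw]
    rw [Finset.mul_sum, Finset.mul_sum, ← Finset.sum_add_distrib]
    refine Finset.sum_le_sum fun z _ => ?_
    exact perspective_ineq f hf (hp.1 z) (hq.1 z)
      (lt_of_lt_of_le hc0 (hQw w₁ hw₁ z)) (lt_of_lt_of_le hc0 (hQw w₂ hw₂ z)) hu hv huv
  have step3 : u * D p w₁ + v * D q w₂
      ≤ u * sInf (D p '' stdSimplex ℝ (Fin n)) + v * sInf (D q '' stdSimplex ℝ (Fin n)) + ε := by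
    have e1 := mul_le_mul_of_nonneg_left h1.le hu
    have e2 := mul_le_mul_of_nonneg_left h2.le hv
    nlinarith
  calc sInf (D (u • p + v • q) '' stdSimplex ℝ (Fin n))
      ≤ D (u • p + v • q) (u • w₁ + v • w₂) := step1
    _ ≤ u * D p w₁ + v * D q w₂ := step2
    _ ≤ _ := step3
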